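/- Let n ≥ 4 and 1 ≤ i < j ≤ n. Then: (1) if i ≥ 3, then S_0(R_{i−1,j−1,n}) = R_{i,j,n+1} as subsets of F_{n+1}; (2) if j − i ≥ 3, then S_i(R_{i,j−1,n}) = R_{i,j,n+1}; (3) if (n+1) − j ≥ 3, then S_j(R_{i,j,n}) = R_{i,j,n+1}. In particular, if at least one of the conditions i ≥ 3, j − i ≥ 3, (n+1) − j ≥ 3 holds, then there exists k with 1 ≤ k ≤ n such that the image under S_{k−1} of a long-relator set R_{i',j',k'} with i' < j' < k' ≤ n equals R_{i,j,n+1}. -/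
import Mathlib


/-- The ambient free group with generators `λ i j` indexed by ordered pairs of naturals;
the sub-free-group `F_m` is spanned by the generators `lam i j` with `1 ≤ i ≠ j ≤ m`,
and the canonical inclusion `F_m → F_{m'}` is the identity on generators. -/
abbrev FG : Type := FreeGroup (ℕ × ℕ)

/-- The generator `λ_{i,j}`. -/
def lam (i j : ℕ) : FG := FreeGroup.of (i, j)

/-- The commutativity relators `λ_{i,j} λ_{k,l} λ_{i,j}⁻¹ λ_{k,l}⁻¹` of `VP_m`,
for pairwise distinct indices `1 ≤ i, j, k, l ≤ m`. -/
def CR (m : ℕ) : Set FG :=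
  {w | ∃ i j k l : ℕ,
    1 ≤ i ∧ i ≤ m ∧ 1 ≤ j ∧ j ≤ m ∧ 1 ≤ k ∧ k ≤ m ∧ 1 ≤ l ∧ l ≤ m ∧
    i ≠ j ∧ i ≠ k ∧ i ≠ l ∧ j ≠ k ∧ j ≠ l ∧ k ≠ l ∧
    w = lam i j * lam k l * (lam i j)⁻¹ * (lam k l)⁻¹}

/-- The long relators `λ_{k,i} λ_{k,j} λ_{i,j} λ_{k,i}⁻¹ λ_{k,j}⁻¹ λ_{i,j}⁻¹` of `VP_m`,
for pairwise distinct indices `1 ≤ i, j, k ≤ m`. -/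
def LongR (m : ℕ) : Set FG :=
  {w | ∃ i j k : ℕ,
    1 ≤ i ∧ i ≤ m ∧ 1 ≤ j ∧ j ≤ m ∧ 1 ≤ k ∧ k ≤ m ∧
    i ≠ j ∧ i ≠ k ∧ j ≠ k ∧
    w = lam k i * lam k j * lam i j * (lam k i)⁻¹ * (lam k j)⁻¹ * (lam i j)⁻¹}

/-- The full relator set `R^V(m)` of the virtual pure braid group `VP_m`. -/
def RV (m : ℕ) : Set FG := CR m ∪ LongR m

/-- Value of `S_{i-1}` on a generator, given by the displayed case formulas:
for `k < l`, `S_{i-1}(λ_{k,l})` and `S_{i-1}(λ_{l,k})` according to the position of `i`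
relative to `k` and `l`. -/
def Sgen (i : ℕ) (p : ℕ × ℕ) : FG :=
  if p.1 < p.2 then
    -- the generator is `λ_{k,l}` with `k = p.1 < l = p.2`
    if i < p.1 then lam (p.1 + 1) (p.2 + 1)
    else if i = p.1 then lam p.1 (p.2 + 1) * lam (p.1 + 1) (p.2 + 1)
    else if i < p.2 then lam p.1 (p.2 + 1)
    else if i = p.2 then lam p.1 (p.2 + 1) * lam p.1 p.2
    else lam p.1 p.2
  else if p.2 < p.1 then
    -- the generator is `λ_{l,k}` with `k = p.2 < l = p.1`
    if i < p.2 then lam (p.1 + 1) (p.2 + 1)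
    else if i = p.2 then lam (p.1 + 1) (p.2 + 1) * lam (p.1 + 1) p.2
    else if i < p.1 then lam (p.1 + 1) p.2
    else if i = p.1 then lam p.1 p.2 * lam (p.1 + 1) p.2
    else lam p.1 p.2
  else lam p.1 p.2

/-- The free-group homomorphism `S_t = S_{(t+1)-1} : F_m → F_{m+1}` (doubling the
`(t+1)`-st strand), determined on generators by the displayed case formulas. -/
def Smap (t : ℕ) : FG →* FG := FreeGroup.lift (Sgen (t + 1))

/-- The relator `u * v⁻¹` of a relation `u = v`. -/
def relOf (u v : FG) : FG := u * v⁻¹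

/-- The set `R_{i,j,k}` of the six long relators with indices in `{i, j, k}`. -/
def Rtriple (i j k : ℕ) : Set FG :=
  {relOf (lam i j * lam i k * lam j k) (lam j k * lam i k * lam i j),
   relOf (lam j i * lam j k * lam i k) (lam i k * lam j k * lam j i),
   relOf (lam i k * lam i j * lam k j) (lam k j * lam i j * lam i k),
   relOf (lam k i * lam k j * lam i j) (lam i j * lam k j * lam k i),
   relOf (lam j k * lam j i * lam k i) (lam k i * lam j i * lam j k),
   relOf (lam k j * lam k i * lam j i) (lam j i * lam k i * lam k j)}

/-- The commutator `[a,b] = a⁻¹ b⁻¹ a b`. -/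
def commE (a b : FG) : FG := a⁻¹ * b⁻¹ * a * b

/-- The automorphism of the free group induced by a permutation of the indices:
`λ_{i,j} ↦ λ_{σ(i),σ(j)}`. -/
def permF (σ : Equiv.Perm ℕ) : FG →* FG :=
  FreeGroup.lift (fun p => lam (σ p.1) (σ p.2))

lemma Smap_lam (t a b : ℕ) : Smap t (lam a b) = Sgen (t + 1) (a, b) :=
  FreeGroup.lift_apply_of

lemma Sgen_lt_fst (i k l : ℕ) (h1 : k < l) (h : i < k) :
    Sgen i (k, l) = lam (k + 1) (l + 1) := by
  simp only [Sgen]; rw [if_pos h1, if_pos h]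

lemma Sgen_lt_snd (i k l : ℕ) (h1 : k < l) (h : i < k) :
    Sgen i (l, k) = lam (l + 1) (k + 1) := by
  simp only [Sgen]; rw [if_neg (by omega), if_pos h1, if_pos h]

lemma Sgen_mid_fst (i k l : ℕ) (h1 : k < l) (h2 : k < i) (h3 : i < l) :
    Sgen i (k, l) = lam k (l + 1) := by
  simp only [Sgen]; rw [if_pos h1, if_neg (by omega), if_neg (by omega), if_pos h3]

lemma Sgen_mid_snd (i k l : ℕ) (h1 : k < l) (h2 : k < i) (h3 : i < l) :
    Sgen i (l, k) = lam (l + 1) k := by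
  simp only [Sgen]
  rw [if_neg (by omega), if_pos h1, if_neg (by omega), if_neg (by omega), if_pos h3]

lemma Sgen_gt_fst (i k l : ℕ) (h1 : k < l) (h : l < i) :
    Sgen i (k, l) = lam k l := by
  simp only [Sgen]
  rw [if_pos h1, if_neg (by omega), if_neg (by omega), if_neg (by omega), if_neg (by omega)]

lemma Sgen_gt_snd (i k l : ℕ) (h1 : k < l) (h : l < i) :
    Sgen i (l, k) = lam l k := by
  simp only [Sgen]
  rw [if_neg (by omega), if_pos h1, if_neg (by omega), if_neg (by omega),
    if_neg (by omega), if_neg (by omega)]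

lemma image_Rtriple (t a b c a' b' c' : ℕ)
    (h1 : Smap t (lam a b) = lam a' b') (h2 : Smap t (lam b a) = lam b' a')
    (h3 : Smap t (lam a c) = lam a' c') (h4 : Smap t (lam c a) = lam c' a')
    (h5 : Smap t (lam b c) = lam b' c') (h6 : Smap t (lam c b) = lam c' b') :
    Smap t '' Rtriple a b c = Rtriple a' b' c' := by
  simp only [Rtriple, Set.image_insert_eq, Set.image_singleton, relOf, map_mul, map_inv,
    h1, h2, h3, h4, h5, h6]

/-- if `i ≥ 3` then `S_0(R_{i-1,j-1,n}) = R_{i,j,n+1}`;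
if `j - i ≥ 3` then `S_i(R_{i,j-1,n}) = R_{i,j,n+1}`; if `(n+1) - j ≥ 3` then
`S_j(R_{i,j,n}) = R_{i,j,n+1}`; in particular, if one of these conditions holds,
there is `1 ≤ k ≤ n` such that the image under `S_{k-1}` of some long-relator set
`R_{i',j',k'}` with `i' < j' < k' ≤ n` equals `R_{i,j,n+1}`. -/
theorem R_triple_lifting_cases (n i j : ℕ) (hn : 4 ≤ n) (hi : 1 ≤ i) (hij : i < j)
    (hj : j ≤ n) :
    (3 ≤ i → (Smap 0) '' (Rtriple (i - 1) (j - 1) n) = Rtriple i j (n + 1)) ∧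
    (3 ≤ j - i → (Smap i) '' (Rtriple i (j - 1) n) = Rtriple i j (n + 1)) ∧
    (3 ≤ (n + 1) - j → (Smap j) '' (Rtriple i j n) = Rtriple i j (n + 1)) ∧
    ((3 ≤ i ∨ 3 ≤ j - i ∨ 3 ≤ (n + 1) - j) →
      ∃ k, 1 ≤ k ∧ k ≤ n ∧ ∃ i' j' k', i' < j' ∧ j' < k' ∧ k' ≤ n ∧
        (Smap (k - 1)) '' (Rtriple i' j' k') = Rtriple i j (n + 1)) := by
  have case1 : 3 ≤ i → (Smap 0) '' (Rtriple (i - 1) (j - 1) n) = Rtriple i j (n + 1) := by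
    intro h3
    have e1 : i - 1 + 1 = i := by omega
    have e2 : j - 1 + 1 = j := by omega
    apply image_Rtriple <;>
      rw [Smap_lam] <;>
      first
        | (rw [Sgen_lt_fst _ _ _ (by omega) (by omega)]; (try rw [e1]); (try rw [e2]))
        | (rw [Sgen_lt_snd _ _ _ (by omega) (by omega)]; (try rw [e1]); (try rw [e2]))
  have case2 : 3 ≤ j - i → (Smap i) '' (Rtriple i (j - 1) n) = Rtriple i j (n + 1) := by
    intro h3
    have e2 : j - 1 + 1 = j := by omega
    apply image_Rtriple <;> rw [Smap_lam] <;>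
      first
        | (rw [Sgen_mid_fst _ _ _ (by omega) (by omega) (by omega)]; try rw [e2])
        | (rw [Sgen_mid_snd _ _ _ (by omega) (by omega) (by omega)]; try rw [e2])
        | (rw [Sgen_lt_fst _ _ _ (by omega) (by omega)]; try rw [e2])
        | (rw [Sgen_lt_snd _ _ _ (by omega) (by omega)]; try rw [e2])
  have case3 : 3 ≤ (n + 1) - j → (Smap j) '' (Rtriple i j n) = Rtriple i j (n + 1) := by
    intro h3
    apply image_Rtriple <;> rw [Smap_lam] <;>
      first
        | rw [Sgen_gt_fst _ _ _ (by omega) (by omega)]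
        | rw [Sgen_gt_snd _ _ _ (by omega) (by omega)]
        | rw [Sgen_mid_fst _ _ _ (by omega) (by omega) (by omega)]
        | rw [Sgen_mid_snd _ _ _ (by omega) (by omega) (by omega)]
  refine ⟨case1, case2, case3, ?_⟩
  rintro (h | h | h)
  · exact ⟨1, le_refl 1, by omega, i - 1, j - 1, n, by omega, by omega, le_refl n, case1 h⟩
  · refine ⟨i + 1, by omega, by omega, i, j - 1, n, by omega, by omega, le_refl n, ?_⟩
    simpa using case2 h
  · refine ⟨j + 1, by omega, by omega, i, j, n, hij, by omega, le_refl n, ?_⟩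
    simpa using case3 h
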